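/- Let Re > 0 and Δt > 0, let u⁰, u¹ : ℝ³ → ℝ³ be twice continuously differentiable on an open neighborhood of the closed unit cube Ω = [0,1]³, let p : ℝ³ → ℝ be continuously differentiable there, and set ū := (u⁰ + u¹)/2. Suppose the strong-form midpoint time-discrete Navier–Stokes equation holds at every point of Ω: (u¹ − u⁰)/Δt − ū × (curl ū) + ∇p + Re⁻¹ curl(curl ū) = 0, and both u⁰ and u¹ satisfy the tangential boundary condition u⁰ × n = 0 and u¹ × n = 0 on ∂Ω. Then the discrete helicity identity holds: (1/Δt) ( ∫_Ω u¹ · (curl u¹) dx − ∫_Ω u⁰ · (curl u⁰) dx ) = −2 ∫_Ω ∇p · (curl ū) dx − 2 Re⁻¹ ∫_Ω (curl ū) · (curl(curl ū)) dx. -/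

import Mathlib

open MeasureTheory
noncomputable section

abbrev R3 : Type := Fin 3 → ℝ

noncomputable def pd (i : Fin 3) (f : R3 → ℝ) (x : R3) : ℝ :=
  fderiv ℝ f x (Pi.single i 1)

noncomputable def vcurl (v : R3 → R3) (x : R3) : R3 :=
  ![pd 1 (fun y => v y 2) x - pd 2 (fun y => v y 1) x,
    pd 2 (fun y => v y 0) x - pd 0 (fun y => v y 2) x,
    pd 0 (fun y => v y 1) x - pd 1 (fun y => v y 0) x]

noncomputable def vdiv (v : R3 → R3) (x : R3) : ℝ :=
  pd 0 (fun y => v y 0) x + pd 1 (fun y => v y 1) x + pd 2 (fun y => v y 2) x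

noncomputable def vgrad (f : R3 → ℝ) (x : R3) : R3 := fun i => pd i f x

def dot3 (a b : R3) : ℝ := a 0 * b 0 + a 1 * b 1 + a 2 * b 2

def cross3 (a b : R3) : R3 :=
  ![a 1 * b 2 - a 2 * b 1, a 2 * b 0 - a 0 * b 2, a 0 * b 1 - a 1 * b 0]

def cube : Set R3 := Set.Icc 0 1

def onFace (x : R3) (i : Fin 3) : Prop := x i = 0 ∨ x i = 1

def onBdry (x : R3) : Prop := x ∈ cube ∧ ∃ i : Fin 3, onFace x i

def TangentialBC (v : R3 → R3) : Prop :=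
  ∀ x ∈ cube, ∀ i : Fin 3, onFace x i → ∀ j : Fin 3, j ≠ i → v x j = 0

def NormalBC (v : R3 → R3) : Prop :=
  ∀ x ∈ cube, ∀ i : Fin 3, onFace x i → v x i = 0

lemma pd_add' {g h : R3 → ℝ} {x : R3} (hg : DifferentiableAt ℝ g x)
    (hh : DifferentiableAt ℝ h x) (i : Fin 3) :
    pd i (fun y => g y + h y) x = pd i g x + pd i h x := by
  simp only [pd, fderiv_fun_add hg hh, ContinuousLinearMap.add_apply]

lemma pd_const_mul' {g : R3 → ℝ} {x : R3} (hg : DifferentiableAt ℝ g x) (c : ℝ) (i : Fin 3) :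
    pd i (fun y => c * g y) x = c * pd i g x := by
  simp only [pd, fderiv_const_mul hg c, ContinuousLinearMap.smul_apply, smul_eq_mul]

open MeasureTheory
noncomputable section
lemma pd_mul {g h : R3 → ℝ} {x : R3} (hg : DifferentiableAt ℝ g x)
    (hh : DifferentiableAt ℝ h x) (i : Fin 3) :
    pd i (fun y => g y * h y) x = pd i g x * h x + g x * pd i h x := by
  simp only [pd, fderiv_fun_mul hg hh, ContinuousLinearMap.add_apply,
    ContinuousLinearMap.smul_apply, smul_eq_mul]
  ring

lemma pd_sub {g h : R3 → ℝ} {x : R3} (hg : DifferentiableAt ℝ g x)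
    (hh : DifferentiableAt ℝ h x) (i : Fin 3) :
    pd i (fun y => g y - h y) x = pd i g x - pd i h x := by
  simp only [pd, fderiv_fun_sub hg hh, ContinuousLinearMap.sub_apply]

lemma comp_contDiffOn {v : R3 → R3} {U : Set R3} {n : ℕ∞} (hv : ContDiffOn ℝ n v U) (i : Fin 3) :
    ContDiffOn ℝ n (fun y => v y i) U :=
  (ContinuousLinearMap.contDiff (ContinuousLinearMap.proj (R := ℝ) (φ := fun _ : Fin 3 => ℝ) i)).comp_contDiffOn hv

lemma contDiffOn_pd {f : R3 → ℝ} {U : Set R3} {n : ℕ∞} (hU : IsOpen U)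
    (hf : ContDiffOn ℝ (n+1) f U) (i : Fin 3) : ContDiffOn ℝ n (pd i f) U :=
  (hf.fderiv_of_isOpen hU le_rfl).clm_apply contDiffOn_const

lemma continuousOn_vcurl {v : R3 → R3} {U : Set R3} (hU : IsOpen U)
    (hv : ContDiffOn ℝ 1 v U) (i : Fin 3) : ContinuousOn (fun x => vcurl v x i) U := by
  have h : ∀ j k : Fin 3, ContinuousOn (pd j (fun y => v y k)) U := fun j k =>
    (contDiffOn_pd (n := 0) hU (by exact_mod_cast comp_contDiffOn hv k) j).continuousOn
  fin_cases i <;> simp only [vcurl, Matrix.cons_val_zero, Matrix.cons_val_one, Matrix.head_cons,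
    Matrix.cons_val_two, Matrix.tail_cons, Fin.isValue] <;> exact (h _ _).sub (h _ _)

lemma continuousOn_dot_curl {v w : R3 → R3} {U : Set R3} (hU : IsOpen U)
    (hv : ContDiffOn ℝ 1 v U) (hw : ContDiffOn ℝ 1 w U) :
    ContinuousOn (fun x => dot3 (v x) (vcurl w x)) U := by
  have hvc : ∀ i, ContinuousOn (fun y => v y i) U := fun i => (comp_contDiffOn hv i).continuousOn
  have hwc := continuousOn_vcurl hU hw
  exact (((hvc 0).mul (hwc 0)).add ((hvc 1).mul (hwc 1))).add ((hvc 2).mul (hwc 2))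

lemma integrable_dot_curl {v w : R3 → R3} {U : Set R3} (hU : IsOpen U) (hc : cube ⊆ U)
    (hv : ContDiffOn ℝ 1 v U) (hw : ContDiffOn ℝ 1 w U) :
    IntegrableOn (fun x => dot3 (v x) (vcurl w x)) cube :=
  ((continuousOn_dot_curl hU hv hw).mono hc).integrableOn_compact isCompact_Icc

lemma curl_pairing_symm {v w : R3 → R3} {U : Set R3} (hU : IsOpen U) (hc : cube ⊆ U)
    (hv : ContDiffOn ℝ 1 v U) (hw : ContDiffOn ℝ 1 w U)
    (hbv : TangentialBC v) (hbw : TangentialBC w) :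
    ∫ x in cube, dot3 (v x) (vcurl w x) = ∫ x in cube, dot3 (w x) (vcurl v x) := by
  set F : R3 → R3 := fun x => cross3 (v x) (w x) with hF
  have hvd : ∀ x ∈ U, ∀ i, DifferentiableAt ℝ (fun y => v y i) x := fun x hx i =>
    ((comp_contDiffOn hv i).differentiableOn (by simp)).differentiableAt (hU.mem_nhds hx)
  have hwd : ∀ x ∈ U, ∀ i, DifferentiableAt ℝ (fun y => w y i) x := fun x hx i =>
    ((comp_contDiffOn hw i).differentiableOn (by simp)).differentiableAt (hU.mem_nhds hx)
  have hFc0 : (fun y => F y 0) = fun y => v y 1 * w y 2 - v y 2 * w y 1 := by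
    funext y; simp [hF, cross3]
  have hFc1 : (fun y => F y 1) = fun y => v y 2 * w y 0 - v y 0 * w y 2 := by
    funext y; simp [hF, cross3]
  have hFc2 : (fun y => F y 2) = fun y => v y 0 * w y 1 - v y 1 * w y 0 := by
    funext y; simp [hF, cross3]
  have hFd : ∀ x ∈ U, ∀ i, DifferentiableAt ℝ (fun y => F y i) x := by
    intro x hx i
    fin_cases i
    · show DifferentiableAt ℝ (fun y => F y 0) x
      rw [hFc0]; exact ((hvd x hx _).mul (hwd x hx _)).sub ((hvd x hx _).mul (hwd x hx _))
    · show DifferentiableAt ℝ (fun y => F y 1) x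
      rw [hFc1]; exact ((hvd x hx _).mul (hwd x hx _)).sub ((hvd x hx _).mul (hwd x hx _))
    · show DifferentiableAt ℝ (fun y => F y 2) x
      rw [hFc2]; exact ((hvd x hx _).mul (hwd x hx _)).sub ((hvd x hx _).mul (hwd x hx _))
  have hFdiff : ∀ x ∈ U, DifferentiableAt ℝ F x := fun x hx =>
    differentiableAt_pi.2 (hFd x hx)
  have hdiv : ∀ x ∈ U, (∑ i, fderiv ℝ F x (Pi.single i 1) i)
      = dot3 (w x) (vcurl v x) - dot3 (v x) (vcurl w x) := by
    intro x hx
    have hfp : fderiv ℝ F x = ContinuousLinearMap.pi fun j => fderiv ℝ (fun y => F y j) x :=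
      fderiv_pi (hFd x hx)
    have e1 : ∀ i : Fin 3, fderiv ℝ F x (Pi.single i 1) i = pd i (fun y => F y i) x := by
      intro i; rw [hfp]; rfl
    have hm : ∀ i j k : Fin 3, pd i (fun y => v y j * w y k) x
        = pd i (fun y => v y j) x * w x k + v x j * pd i (fun y => w y k) x :=
      fun i j k => pd_mul (hvd x hx j) (hwd x hx k) i
    have hs : ∀ i j k l m : Fin 3, pd i (fun y => v y j * w y k - v y l * w y m) x
        = pd i (fun y => v y j * w y k) x - pd i (fun y => v y l * w y m) x :=
      fun i j k l m => pd_sub ((hvd x hx j).mul (hwd x hx k))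
        ((hvd x hx l).mul (hwd x hx m)) i
    rw [Fin.sum_univ_three, e1 0, e1 1, e1 2, hFc0, hFc1, hFc2, hs, hs, hs,
      hm, hm, hm, hm, hm, hm]
    simp only [dot3, vcurl, Matrix.cons_val_zero, Matrix.cons_val_one, Matrix.head_cons,
      Matrix.cons_val_two, Matrix.tail_cons]
    ring
  -- boundary values
  have hcross0 : ∀ z ∈ cube, ∀ i, onFace z i → F z i = 0 := by
    intro z hz i hf
    fin_cases i
    · simp [hF, cross3, hbv z hz _ hf 1 (by decide), hbv z hz _ hf 2 (by decide)]
    · simp [hF, cross3, hbv z hz _ hf 2 (by decide), hbv z hz _ hf 0 (by decide)]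
    · simp [hF, cross3, hbv z hz _ hf 0 (by decide), hbv z hz _ hf 1 (by decide)]
  have hpiIoo : (Set.pi Set.univ fun i => Set.Ioo ((0:R3) i) ((1:R3) i)) ⊆ cube := by
    intro x hx
    exact ⟨fun i => (hx i trivial).1.le, fun i => (hx i trivial).2.le⟩
  have hIc1 : IntegrableOn (fun x => dot3 (w x) (vcurl v x)) cube :=
    integrable_dot_curl hU hc hw hv
  have hIc2 : IntegrableOn (fun x => dot3 (v x) (vcurl w x)) cube :=
    integrable_dot_curl hU hc hv hw
  have Hc : ContinuousOn F (Set.Icc (0:R3) 1) := by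
    apply continuousOn_pi.2
    intro i
    have hvc : ∀ j, ContinuousOn (fun y => v y j) cube := fun j =>
      ((comp_contDiffOn hv j).continuousOn).mono hc
    have hwc : ∀ j, ContinuousOn (fun y => w y j) cube := fun j =>
      ((comp_contDiffOn hw j).continuousOn).mono hc
    fin_cases i
    · show ContinuousOn (fun y => F y 0) cube
      rw [hFc0]; exact ((hvc 1).mul (hwc 2)).sub ((hvc 2).mul (hwc 1))
    · show ContinuousOn (fun y => F y 1) cube
      rw [hFc1]; exact ((hvc 2).mul (hwc 0)).sub ((hvc 0).mul (hwc 2))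
    · show ContinuousOn (fun y => F y 2) cube
      rw [hFc2]; exact ((hvc 0).mul (hwc 1)).sub ((hvc 1).mul (hwc 0))
  have Hi : IntegrableOn (fun x => ∑ i, fderiv ℝ F x (Pi.single i 1) i)
      (Set.Icc (0:R3) 1) := by
    have hI3 : IntegrableOn
        (fun x => dot3 (w x) (vcurl v x) - dot3 (v x) (vcurl w x)) cube := hIc1.sub hIc2
    apply IntegrableOn.congr_fun hI3 _ measurableSet_Icc
    intro x hx
    exact (hdiv x (hc hx)).symm
  have key := integral_divergence_of_hasFDerivAt_off_countable
    (0:R3) 1 (fun i => zero_le_one) F (fun x => fderiv ℝ F x) ∅ Set.countable_empty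
    Hc (fun x hx => (hFdiff x (hc (hpiIoo hx.1))).hasFDerivAt) Hi
  have hfaces : ∀ i : Fin 3,
      ((∫ x in Set.Icc ((0:R3) ∘ i.succAbove) ((1:R3) ∘ i.succAbove),
          F (i.insertNth ((1:R3) i) x) i)
        - ∫ x in Set.Icc ((0:R3) ∘ i.succAbove) ((1:R3) ∘ i.succAbove),
          F (i.insertNth ((0:R3) i) x) i) = 0 := by
    intro i
    have h1 : ∀ c : ℝ, (c = 0 ∨ c = 1) →
        ∫ x in Set.Icc ((0:R3) ∘ i.succAbove) ((1:R3) ∘ i.succAbove),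
          F (i.insertNth c x) i = 0 := by
      intro c hc01
      apply setIntegral_eq_zero_of_forall_eq_zero
      intro y hy
      have hz : i.insertNth c y ∈ cube := by
        apply Fin.insertNth_mem_Icc.2
        refine ⟨?_, hy⟩
        rcases hc01 with h | h <;> simp [h]
      have hface : onFace (i.insertNth c y) i := by
        rw [onFace, Fin.insertNth_apply_same]; exact hc01
      exact hcross0 _ hz i hface
    rw [h1 ((1:R3) i) (by simp), h1 ((0:R3) i) (by simp), sub_zero]
  rw [Finset.sum_eq_zero (fun i _ => hfaces i)] at key
  have hkey2 : ∫ x in cube, (dot3 (w x) (vcurl v x) - dot3 (v x) (vcurl w x)) = 0 := by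
    rw [← key]
    exact (setIntegral_congr_fun measurableSet_Icc (fun x hx => (hdiv x (hc hx)).symm))
  rw [integral_sub hIc1 hIc2] at hkey2
  linarith

/-- Discrete helicity identity for the strong-form midpoint time-discrete
Navier–Stokes equation (the PINN loss form): with ū = (u⁰+u¹)/2,
(H(u¹) − H(u⁰))/Δt = −2∫∇p·(curl ū) − 2Re⁻¹∫(curl ū)·(curl curl ū). -/
theorem discrete_helicity_identity (Re Δt : ℝ) (hRe : 0 < Re) (hΔt : 0 < Δt)
    (u0 u1 ub : R3 → R3) (p : R3 → ℝ) (U : Set R3)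
    (hU : IsOpen U) (hcube : cube ⊆ U)
    (hu0 : ContDiffOn ℝ 2 u0 U) (hu1 : ContDiffOn ℝ 2 u1 U)
    (hp : ContDiffOn ℝ 1 p U)
    (hub : ub = fun x => (2 : ℝ)⁻¹ • (u0 x + u1 x))
    (hmom : ∀ x ∈ cube,
      Δt⁻¹ • (u1 x - u0 x) - cross3 (ub x) (vcurl ub x) + vgrad p x
        + Re⁻¹ • vcurl (vcurl ub) x = 0)
    (hbc0 : TangentialBC u0) (hbc1 : TangentialBC u1) :
    ((∫ x in cube, dot3 (u1 x) (vcurl u1 x))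
        - ∫ x in cube, dot3 (u0 x) (vcurl u0 x)) / Δt
      = -2 * (∫ x in cube, dot3 (vgrad p x) (vcurl ub x))
        - 2 * Re⁻¹ * ∫ x in cube, dot3 (vcurl ub x) (vcurl (vcurl ub) x) := by
  -- regularity
  have hub2 : ContDiffOn ℝ 2 ub U := by
    rw [hub]; exact (hu0.add hu1).const_smul _
  have hu0' : ContDiffOn ℝ 1 u0 U := hu0.of_le one_le_two
  have hu1' : ContDiffOn ℝ 1 u1 U := hu1.of_le one_le_two
  have hub' : ContDiffOn ℝ 1 ub U := hub2.of_le one_le_two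
  have hcurlub : ContDiffOn ℝ 1 (vcurl ub) U := by
    apply contDiffOn_pi.2
    intro i
    have hpdc : ∀ j k : Fin 3, ContDiffOn ℝ 1 (pd j (fun y => ub y k)) U := fun j k =>
      contDiffOn_pd (n := 1) hU (by exact_mod_cast comp_contDiffOn hub2 k) j
    fin_cases i
    · have : (fun x => vcurl ub x 0)
          = fun x => pd 1 (fun y => ub y 2) x - pd 2 (fun y => ub y 1) x := by
        funext x; simp [vcurl]
      exact this ▸ (hpdc 1 2).sub (hpdc 2 1)
    · have : (fun x => vcurl ub x 1)
          = fun x => pd 2 (fun y => ub y 0) x - pd 0 (fun y => ub y 2) x := by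
        funext x; simp [vcurl]
      exact this ▸ (hpdc 2 0).sub (hpdc 0 2)
    · have : (fun x => vcurl ub x 2)
          = fun x => pd 0 (fun y => ub y 1) x - pd 1 (fun y => ub y 0) x := by
        funext x; simp [vcurl]
      exact this ▸ (hpdc 0 1).sub (hpdc 1 0)
  -- integrability of all the pairings
  have hIa1 := integrable_dot_curl hU hcube hu1' hu1'
  have hIa0 := integrable_dot_curl hU hcube hu0' hu0'
  have hIb := integrable_dot_curl hU hcube hu0' hu1'
  have hIc := integrable_dot_curl hU hcube hu1' hu0'
  have hId1 := integrable_dot_curl hU hcube hu1' hub'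
  have hId0 := integrable_dot_curl hU hcube hu0' hub'
  have hIQ := integrable_dot_curl hU hcube hcurlub hcurlub
  have hIP : IntegrableOn (fun x => dot3 (vgrad p x) (vcurl ub x)) cube := by
    have hg : ∀ i : Fin 3, ContinuousOn (fun x => vgrad p x i) U := fun i =>
      (contDiffOn_pd (n := 0) hU (by exact_mod_cast hp) i).continuousOn
    have hw := continuousOn_vcurl hU hub'
    have : ContinuousOn (fun x => dot3 (vgrad p x) (vcurl ub x)) U :=
      (((hg 0).mul (hw 0)).add ((hg 1).mul (hw 1))).add ((hg 2).mul (hw 2))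
    exact (this.mono hcube).integrableOn_compact isCompact_Icc
  -- differentiability of components
  have hd0 : ∀ x ∈ U, ∀ k, DifferentiableAt ℝ (fun y => u0 y k) x := fun x hx k =>
    ((comp_contDiffOn hu0' k).differentiableOn (by simp)).differentiableAt (hU.mem_nhds hx)
  have hd1 : ∀ x ∈ U, ∀ k, DifferentiableAt ℝ (fun y => u1 y k) x := fun x hx k =>
    ((comp_contDiffOn hu1' k).differentiableOn (by simp)).differentiableAt (hU.mem_nhds hx)
  have hubc : ∀ k : Fin 3, (fun y => ub y k) = fun y => 2⁻¹ * (u0 y k + u1 y k) := by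
    intro k; funext y; rw [hub]; simp only [Pi.smul_apply, Pi.add_apply, smul_eq_mul]
  -- curl of ub = average of curls, pointwise on U
  have hpdub : ∀ x ∈ U, ∀ i k : Fin 3, pd i (fun y => ub y k) x
      = 2⁻¹ * (pd i (fun y => u0 y k) x + pd i (fun y => u1 y k) x) := by
    intro x hx i k
    rw [hubc k, pd_const_mul' (g := fun y => u0 y k + u1 y k) ((hd0 x hx k).add (hd1 x hx k)) _ i,
      pd_add' (hd0 x hx k) (hd1 x hx k) i]
  have hcurlub_i : ∀ x ∈ U, ∀ i, vcurl ub x i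
      = 2⁻¹ * (vcurl u0 x i + vcurl u1 x i) := by
    intro x hx i
    have h := hpdub x hx
    fin_cases i
    · show vcurl ub x 0 = 2⁻¹ * (vcurl u0 x 0 + vcurl u1 x 0)
      simp only [vcurl, Matrix.cons_val_zero]
      rw [h 1 2, h 2 1]; ring
    · show vcurl ub x 1 = 2⁻¹ * (vcurl u0 x 1 + vcurl u1 x 1)
      simp only [vcurl, Matrix.cons_val_one, Matrix.head_cons, Matrix.cons_val_zero]
      rw [h 2 0, h 0 2]; ring
    · show vcurl ub x 2 = 2⁻¹ * (vcurl u0 x 2 + vcurl u1 x 2)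
      simp only [vcurl, Matrix.cons_val_two, Matrix.tail_cons, Matrix.head_cons]
      rw [h 0 1, h 1 0]; ring
  -- pointwise helicity-difference identity on U
  have hpt : ∀ x ∈ U, dot3 (u1 x) (vcurl u1 x) - dot3 (u0 x) (vcurl u0 x)
      = 2 * (dot3 (u1 x) (vcurl ub x) - dot3 (u0 x) (vcurl ub x))
        + (dot3 (u0 x) (vcurl u1 x) - dot3 (u1 x) (vcurl u0 x)) := by
    intro x hx
    simp only [dot3, hcurlub_i x hx]
    ring
  -- pointwise momentum consequence on cube
  have hmom' : ∀ x ∈ cube, dot3 (u1 x) (vcurl ub x) - dot3 (u0 x) (vcurl ub x)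
      = Δt * (-(dot3 (vgrad p x) (vcurl ub x))
          - Re⁻¹ * dot3 (vcurl ub x) (vcurl (vcurl ub) x)) := by
    intro x hx
    have h0 := congrFun (hmom x hx) 0
    have h1 := congrFun (hmom x hx) 1
    have h2 := congrFun (hmom x hx) 2
    simp only [Pi.add_apply, Pi.sub_apply, Pi.smul_apply, smul_eq_mul, cross3, vgrad,
      Matrix.cons_val_zero, Matrix.cons_val_one, Matrix.head_cons, Matrix.cons_val_two,
      Matrix.tail_cons, Pi.zero_apply, Fin.isValue] at h0 h1 h2
    have e0 : u1 x 0 - u0 x 0 = Δt * (ub x 1 * vcurl ub x 2 - ub x 2 * vcurl ub x 1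
        - pd 0 p x - Re⁻¹ * vcurl (vcurl ub) x 0) := by
      field_simp at h0 ⊢; linarith
    have e1 : u1 x 1 - u0 x 1 = Δt * (ub x 2 * vcurl ub x 0 - ub x 0 * vcurl ub x 2
        - pd 1 p x - Re⁻¹ * vcurl (vcurl ub) x 1) := by
      field_simp at h1 ⊢; linarith
    have e2 : u1 x 2 - u0 x 2 = Δt * (ub x 0 * vcurl ub x 1 - ub x 1 * vcurl ub x 0
        - pd 2 p x - Re⁻¹ * vcurl (vcurl ub) x 2) := by
      field_simp at h2 ⊢; linarith
    simp only [dot3, vgrad]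
    linear_combination (vcurl ub x 0) * e0 + (vcurl ub x 1) * e1 + (vcurl ub x 2) * e2
  -- integral identities
  have hsym : ∫ x in cube, dot3 (u0 x) (vcurl u1 x) = ∫ x in cube, dot3 (u1 x) (vcurl u0 x) :=
    curl_pairing_symm hU hcube hu0' hu1' hbc0 hbc1
  have e1 : ∫ x in cube, (dot3 (u1 x) (vcurl u1 x) - dot3 (u0 x) (vcurl u0 x))
      = ∫ x in cube, (2 * (dot3 (u1 x) (vcurl ub x) - dot3 (u0 x) (vcurl ub x))
        + (dot3 (u0 x) (vcurl u1 x) - dot3 (u1 x) (vcurl u0 x))) :=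
    setIntegral_congr_fun measurableSet_Icc (fun x hx => hpt x (hcube hx))
  have e2 : ∫ x in cube, (dot3 (u1 x) (vcurl ub x) - dot3 (u0 x) (vcurl ub x))
      = ∫ x in cube, Δt * (-(dot3 (vgrad p x) (vcurl ub x))
          - Re⁻¹ * dot3 (vcurl ub x) (vcurl (vcurl ub) x)) :=
    setIntegral_congr_fun measurableSet_Icc (fun x hx => hmom' x hx)
  have hIe : IntegrableOn
      (fun x => 2 * (dot3 (u1 x) (vcurl ub x) - dot3 (u0 x) (vcurl ub x))) cube :=
    (hId1.sub hId0).const_mul 2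
  have hIf : IntegrableOn
      (fun x => dot3 (u0 x) (vcurl u1 x) - dot3 (u1 x) (vcurl u0 x)) cube := hIb.sub hIc
  have hIPn : IntegrableOn (fun x => -(dot3 (vgrad p x) (vcurl ub x))) cube := hIP.neg
  have hIQc : IntegrableOn
      (fun x => Re⁻¹ * dot3 (vcurl ub x) (vcurl (vcurl ub) x)) cube := hIQ.const_mul _
  rw [integral_sub hIa1 hIa0, integral_add hIe hIf,
    integral_const_mul, integral_sub hId1 hId0, integral_sub hIb hIc] at e1
  rw [integral_sub hId1 hId0, integral_const_mul,
    integral_sub hIPn hIQc, integral_neg, integral_const_mul] at e2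
  rw [div_eq_iff hΔt.ne']
  linear_combination e1 + 2 * e2 + hsym
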